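/- Let X be a geodesic metric space with basepoint o and κ a concave monotone increasing sublinear function. If α₁ and α₂ are weakly κ-Morse quasi-geodesic rays with α₁(0) = α₂(0) = o, then Z = α₁ ∪ α₂ is weakly κ-Morse. Specifically: any (q,Q)-quasi-geodesic segment β with endpoints on Z lies in a (κ, C)-neighborhood of Z for a constant C depending only on q, Q and the weak Morse gauges of α₁ and α₂. -/

import Mathlib

open Metric Set Filter

/-- A sublinear function: `κ : [0,∞) → [1,∞)` concave, monotone increasing,
with `κ(t)/t → 0`. -/
def Sublinear (κ : ℝ → ℝ) : Prop :=
  (∀ t : ℝ, 1 ≤ κ t) ∧ Monotone κ ∧ ConcaveOn ℝ (Set.Ici 0) κ ∧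
    Tendsto (fun t => κ t / t) atTop (nhds 0)

/-- A continuous `(q,Q)`-quasi-geodesic ray. -/
def QGRay {X : Type*} [MetricSpace X] (q Q : ℝ) (α : ℝ → X) : Prop :=
  Continuous α ∧ ∀ s t : ℝ, 0 ≤ s → 0 ≤ t →
    (1 / q) * |s - t| - Q ≤ dist (α s) (α t) ∧ dist (α s) (α t) ≤ q * |s - t| + Q

/-- A continuous `(q,Q)`-quasi-geodesic segment defined on `[a,b]`. -/
def QGSeg {X : Type*} [MetricSpace X] (q Q a b : ℝ) (α : ℝ → X) : Prop :=
  Continuous α ∧ ∀ s t : ℝ, s ∈ Set.Icc a b → t ∈ Set.Icc a b →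
    (1 / q) * |s - t| - Q ≤ dist (α s) (α t) ∧ dist (α s) (α t) ≤ q * |s - t| + Q

/-- `X` is a geodesic metric space. -/
def IsGeodesicSpace (X : Type*) [MetricSpace X] : Prop :=
  ∀ x y : X, ∃ γ : ℝ → X, γ 0 = x ∧ γ (dist x y) = y ∧
    ∀ s t : ℝ, s ∈ Set.Icc 0 (dist x y) → t ∈ Set.Icc 0 (dist x y) →
      dist (γ s) (γ t) = |s - t|

/-- A set `Z` is weakly `κ`-Morse: there is a map `m : ℝ⁺×ℝ⁺ → ℝ⁺` such that every
`(q,Q)`-quasi-geodesic segment with endpoints on `Z` lies in the `(κ, m q Q)`-neighborhood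
of `Z` (neighborhoods measured with respect to the basepoint `o`). -/
def WeaklyKappaMorse {X : Type*} [MetricSpace X] (o : X) (κ : ℝ → ℝ) (Z : Set X) : Prop :=
  ∃ m : ℝ → ℝ → ℝ, ∀ q Q a b : ℝ, 0 < q → 0 ≤ Q → a ≤ b →
    ∀ β : ℝ → X, QGSeg q Q a b β → β a ∈ Z → β b ∈ Z →
      ∀ s ∈ Set.Icc a b, Metric.infDist (β s) Z ≤ m q Q * κ (dist o (β s))

/-- A clamped geodesic from `x` to `y`: globally continuous, equal to `x` at `0`,
equal to `y` at all times `≥ dist x y`, and isometric on `[0, dist x y]`. -/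
lemma exists_clamped_geodesic {X : Type*} [MetricSpace X] (hgeo : IsGeodesicSpace X)
    (x y : X) : ∃ g : ℝ → X, Continuous g ∧ g 0 = x ∧ (∀ t, dist x y ≤ t → g t = y) ∧
      ∀ s t : ℝ, s ∈ Set.Icc 0 (dist x y) → t ∈ Set.Icc 0 (dist x y) →
        dist (g s) (g t) = |s - t| := by
  obtain ⟨g, hg0, hgd, hiso⟩ := hgeo x y
  set D := dist x y with hD
  have hD0 : 0 ≤ D := dist_nonneg
  have hc : ∀ t : ℝ, min D (max 0 t) ∈ Set.Icc 0 D := fun t =>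
    ⟨le_min hD0 (le_max_left 0 t), min_le_left _ _⟩
  have hcl : ∀ s t : ℝ, |min D (max 0 s) - min D (max 0 t)| ≤ |s - t| := by
    intro s t
    calc |min D (max 0 s) - min D (max 0 t)| ≤ max |D - D| |max 0 s - max 0 t| :=
          abs_min_sub_min_le_max _ _ _ _
      _ ≤ |s - t| := by
          rw [sub_self, abs_zero]
          refine max_le (abs_nonneg _) ?_
          calc |max 0 s - max 0 t| ≤ max |(0:ℝ) - 0| |s - t| := abs_max_sub_max_le_max _ _ _ _
            _ ≤ |s - t| := by simp
  refine ⟨fun t => g (min D (max 0 t)), ?_, ?_, ?_, ?_⟩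
  · refine (LipschitzWith.of_dist_le_mul (K := 1) (fun s t => ?_)).continuous
    rw [NNReal.coe_one, one_mul, Real.dist_eq]
    calc dist (g (min D (max 0 s))) (g (min D (max 0 t)))
        = |min D (max 0 s) - min D (max 0 t)| := hiso _ _ (hc s) (hc t)
      _ ≤ |s - t| := hcl s t
  · show g (min D (max 0 0)) = x
    rw [max_self, min_eq_right hD0, hg0]
  · intro t ht
    show g (min D (max 0 t)) = y
    rw [max_eq_right (hD0.trans ht), min_eq_left ht, hgd]
  · intro s t hs ht
    show dist (g (min D (max 0 s))) (g (min D (max 0 t))) = |s - t|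
    rw [max_eq_right hs.1, min_eq_right hs.2, max_eq_right ht.1, min_eq_right ht.2]
    exact hiso s t hs ht

/-- The reversal of a quasi-geodesic segment is a quasi-geodesic segment. -/
lemma QGSeg.rev {X : Type*} [MetricSpace X] {q Q a b : ℝ} {β : ℝ → X}
    (hβ : QGSeg q Q a b β) : QGSeg q Q a b (fun u => β (a + b - u)) := by
  refine ⟨hβ.1.comp (by continuity), fun s t hs ht => ?_⟩
  have h1 : a + b - s ∈ Set.Icc a b := ⟨by linarith [hs.2], by linarith [hs.1]⟩
  have h2 : a + b - t ∈ Set.Icc a b := ⟨by linarith [ht.2], by linarith [ht.1]⟩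
  have := hβ.2 _ _ h1 h2
  have he : |a + b - s - (a + b - t)| = |s - t| := by
    rw [show a + b - s - (a + b - t) = t - s by ring, abs_sub_comm]
  rw [he] at this
  exact this

/-- Concatenating a geodesic from `o` to a nearest point `β t₀` of `o` on a
`(q,Q)`-quasi-geodesic `β` with the part of `β` after `t₀` yields a
`(3 max(q,1), Q)`-quasi-geodesic starting at `o`. -/
lemma concat_qgseg {X : Type*} [MetricSpace X] (hgeo : IsGeodesicSpace X) (o : X)
    {q Q a b t₀ : ℝ} (hq : 0 < q) (hQ : 0 ≤ Q) (ht₀ : t₀ ∈ Set.Icc a b)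
    {β : ℝ → X} (hβ : QGSeg q Q a b β)
    (hmin : ∀ t ∈ Set.Icc a b, dist o (β t₀) ≤ dist o (β t)) :
    ∃ γ : ℝ → X, QGSeg (3 * max q 1) Q (t₀ - dist o (β t₀)) b γ ∧
      γ (t₀ - dist o (β t₀)) = o ∧ ∀ s ∈ Set.Icc t₀ b, γ s = β s := by
  obtain ⟨g, hgc, hg0, hgL, hgiso⟩ := exists_clamped_geodesic hgeo o (β t₀)
  set L := dist o (β t₀) with hLdef
  have hL0 : 0 ≤ L := dist_nonneg
  set a' := t₀ - L with ha'def
  have ha't₀ : a' ≤ t₀ := by simp [ha'def]; linarith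
  have hgt₀ : g L = β t₀ := hgL L le_rfl
  set M := max q 1 with hM
  have hM1 : 1 ≤ M := le_max_right _ _
  have hMq : q ≤ M := le_max_left _ _
  have hM0 : 0 < M := lt_of_lt_of_le one_pos hM1
  have hq'0 : 0 < 3 * M := by linarith
  set γ : ℝ → X := fun u => if u ≤ t₀ then g (u - a') else β u with hγdef
  -- basic formulas
  have hmem : ∀ u : ℝ, u ∈ Set.Icc a' t₀ → u - a' ∈ Set.Icc 0 L := by
    intro u hu
    exact ⟨by linarith [hu.1], by rw [ha'def] at hu ⊢; linarith [hu.2]⟩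
  have hdox : ∀ u ∈ Set.Icc a' t₀, dist o (g (u - a')) = u - a' := by
    intro u hu
    rw [← hg0, hgiso 0 (u - a') ⟨le_rfl, hL0⟩ (hmem u hu)]
    rw [abs_of_nonpos (by linarith [hu.1])]; ring
  have hdpx : ∀ u ∈ Set.Icc a' t₀, dist (g (u - a')) (β t₀) = t₀ - u := by
    intro u hu
    rw [← hgt₀, hgiso (u - a') L (hmem u hu) ⟨hL0, le_rfl⟩]
    rw [abs_of_nonpos (by rw [ha'def] at hu ⊢; linarith [hu.2])]
    rw [ha'def]; ring
  have hγg : ∀ u : ℝ, u ≤ t₀ → γ u = g (u - a') := by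
    intro u hu; simp only [hγdef, if_pos hu]
  have hγβ : ∀ u : ℝ, t₀ < u → γ u = β u := by
    intro u hu; simp only [hγdef, if_neg (not_le.mpr hu)]
  have hγt₀ : γ t₀ = β t₀ := by
    rw [hγg t₀ le_rfl, ha'def, show t₀ - (t₀ - L) = L by ring, hgt₀]
  have hγeq : ∀ s ∈ Set.Icc t₀ b, γ s = β s := by
    intro s hsb
    rcases lt_or_eq_of_le hsb.1 with h | h
    · exact hγβ s h
    · rw [← h, hγt₀]
  refine ⟨γ, ⟨?_, ?_⟩, ?_, hγeq⟩
  · -- continuity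
    refine Continuous.if_le (hgc.comp (continuous_id.sub continuous_const)) hβ.1
      continuous_id continuous_const ?_
    intro x hx
    subst hx
    show g (x - a') = β x
    rw [ha'def, show x - (x - L) = L by ring, hgt₀]
  · -- quasi-geodesic bounds
    have key : ∀ s t : ℝ, s ∈ Set.Icc a' b → t ∈ Set.Icc a' b → s ≤ t →
        (1 / (3 * M)) * (t - s) - Q ≤ dist (γ s) (γ t) ∧
          dist (γ s) (γ t) ≤ (3 * M) * (t - s) + Q := by
      intro s t hsm htm hst
      have hts : 0 ≤ t - s := by linarith
      by_cases h1 : t ≤ t₀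
      · -- both on the geodesic
        have hs' : s ≤ t₀ := hst.trans h1
        rw [hγg s hs', hγg t h1]
        have hd : dist (g (s - a')) (g (t - a')) = t - s := by
          rw [hgiso (s - a') (t - a') (hmem s ⟨hsm.1, hs'⟩) (hmem t ⟨htm.1, h1⟩)]
          rw [abs_of_nonpos (by linarith)]; ring
        rw [hd]
        have h1q : 1 / (3 * M) ≤ 1 := by
          rw [div_le_one hq'0]; linarith
        constructor
        · nlinarith [mul_le_mul_of_nonneg_right h1q hts]
        · nlinarith
      · push_neg at h1
        have ht' : t ∈ Set.Icc a b := ⟨ht₀.1.trans h1.le, htm.2⟩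
        by_cases h2 : s ≤ t₀
        · -- mixed case
          rw [hγg s h2, hγβ t h1]
          have hsmem : s ∈ Set.Icc a' t₀ := ⟨hsm.1, h2⟩
          have dox := hdox s hsmem
          have dpx := hdpx s hsmem
          obtain ⟨hlow, hup⟩ := hβ.2 t₀ t ht₀ ht'
          have habs : |t₀ - t| = t - t₀ := by rw [abs_of_nonpos (by linarith)]; ring
          rw [habs] at hlow hup
          have doy : L ≤ dist o (β t) := hmin t ht'
          set d := dist (g (s - a')) (β t) with hd
          have hd0 : 0 ≤ d := dist_nonneg
          -- (i): d ≥ t₀ - s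
          have hi : t₀ - s ≤ d := by
            have htri := dist_triangle o (g (s - a')) (β t)
            rw [dox] at htri
            have hsa : s - a' = L - (t₀ - s) := by rw [ha'def]; ring
            linarith
          have hA0 : 0 ≤ t₀ - s := by linarith
          -- (ii): β-half lower bound
          have hii : dist (β t₀) (β t) ≤ (t₀ - s) + d := by
            have htri := dist_triangle (β t₀) (g (s - a')) (β t)
            rw [dist_comm (β t₀) (g (s - a')), dpx] at htri
            linarith
          have hBq : t - t₀ ≤ ((t₀ - s) + d + Q) * q := by
            have h3 : (1 / q) * (t - t₀) ≤ (t₀ - s) + d + Q := by linarith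
            rw [one_div_mul_eq_div, div_le_iff₀ hq] at h3
            linarith [mul_le_mul_of_nonneg_right (le_refl ((t₀ - s) + d + Q)) hq.le]
          constructor
          · -- lower bound
            have key2 : t - s ≤ (3 * M) * (d + Q) := by
              nlinarith [mul_nonneg (sub_nonneg.mpr hMq) (by positivity : (0:ℝ) ≤ (t₀ - s) + d + Q),
                mul_nonneg hM0.le (sub_nonneg.mpr hi),
                mul_nonneg (sub_nonneg.mpr hM1) hd0,
                mul_nonneg (sub_nonneg.mpr hM1) hQ,
                mul_nonneg hM0.le hQ]
            have := mul_le_mul_of_nonneg_left key2 (by positivity : (0:ℝ) ≤ 1 / (3 * M))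
            rw [← mul_assoc, one_div_mul_cancel (ne_of_gt hq'0), one_mul] at this
            linarith
          · -- upper bound
            have htri := dist_triangle (g (s - a')) (β t₀) (β t)
            rw [dpx] at htri
            nlinarith [mul_nonneg (sub_nonneg.mpr hMq) (by linarith : (0:ℝ) ≤ t - t₀),
              mul_nonneg (sub_nonneg.mpr hM1) hA0, mul_nonneg hM0.le hA0,
              mul_nonneg hM0.le (by linarith : (0:ℝ) ≤ t - t₀)]
        · -- both on β
          push_neg at h2
          have hs' : s ∈ Set.Icc a b := ⟨ht₀.1.trans h2.le, hsm.2⟩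
          rw [hγβ s h2, hγβ t h1]
          obtain ⟨hlow, hup⟩ := hβ.2 s t hs' ht'
          have habs : |s - t| = t - s := by rw [abs_of_nonpos (by linarith)]; ring
          rw [habs] at hlow hup
          have hqq' : 1 / (3 * M) ≤ 1 / q := by
            apply one_div_le_one_div_of_le hq; linarith
          constructor
          · nlinarith [mul_le_mul_of_nonneg_right hqq' hts]
          · nlinarith [mul_nonneg (by linarith : (0:ℝ) ≤ 3 * M - q) hts]
    intro s t hsm htm
    rcases le_total s t with h | h
    · rw [abs_of_nonpos (by linarith), neg_sub]
      exact key s t hsm htm h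
    · rw [dist_comm, abs_sub_comm, abs_of_nonpos (by linarith), neg_sub]
      exact key t s htm hsm h
  · -- starts at o
    rw [hγg a' ha't₀, sub_self, hg0]

/-- The cross case: endpoints on two different weakly Morse sets both containing `o`. -/
lemma cross_case {X : Type*} [MetricSpace X] (hgeo : IsGeodesicSpace X)
    (κ : ℝ → ℝ) (hκ1 : ∀ t : ℝ, 0 ≤ κ t) (o : X) (P R : Set X) (hoP : o ∈ P) (hoR : o ∈ R)
    (mP mR : ℝ → ℝ → ℝ)
    (hmP : ∀ q Q a b : ℝ, 0 < q → 0 ≤ Q → a ≤ b →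
      ∀ β : ℝ → X, QGSeg q Q a b β → β a ∈ P → β b ∈ P →
        ∀ s ∈ Set.Icc a b, Metric.infDist (β s) P ≤ mP q Q * κ (dist o (β s)))
    (hmR : ∀ q Q a b : ℝ, 0 < q → 0 ≤ Q → a ≤ b →
      ∀ β : ℝ → X, QGSeg q Q a b β → β a ∈ R → β b ∈ R →
        ∀ s ∈ Set.Icc a b, Metric.infDist (β s) R ≤ mR q Q * κ (dist o (β s)))
    (q Q a b : ℝ) (hq : 0 < q) (hQ : 0 ≤ Q) (hab : a ≤ b)
    (β : ℝ → X) (hβ : QGSeg q Q a b β) (hza : β a ∈ P) (hzb : β b ∈ R) :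
    ∀ s ∈ Set.Icc a b, Metric.infDist (β s) (P ∪ R) ≤
      max (mP (3 * max q 1) Q) (mR (3 * max q 1) Q) * κ (dist o (β s)) := by
  obtain ⟨t₀, ht₀, hmin'⟩ := isCompact_Icc.exists_isMinOn (Set.nonempty_Icc.mpr hab)
    ((continuous_const.dist hβ.1).continuousOn (s := Set.Icc a b))
  have hmin : ∀ t ∈ Set.Icc a b, dist o (β t₀) ≤ dist o (β t) := fun t ht =>
    hmin' ht
  have hq'0 : 0 < 3 * max q 1 := by positivity
  intro s hs
  rcases le_total t₀ s with hst | hst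
  · -- use the R side
    obtain ⟨γ, hγ, hγa, hγeq⟩ := concat_qgseg hgeo o hq hQ ht₀ hβ hmin
    have hL0 : 0 ≤ dist o (β t₀) := dist_nonneg
    have ha'b : t₀ - dist o (β t₀) ≤ b := by linarith [ht₀.2]
    have hγb : γ b = β b := hγeq b ⟨ht₀.2, le_rfl⟩
    have hkey := hmR (3 * max q 1) Q (t₀ - dist o (β t₀)) b hq'0 hQ ha'b γ hγ
      (by rw [hγa]; exact hoR) (by rw [hγb]; exact hzb) s ⟨by linarith, hs.2⟩
    rw [hγeq s ⟨hst, hs.2⟩] at hkey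
    calc Metric.infDist (β s) (P ∪ R) ≤ Metric.infDist (β s) R :=
          Metric.infDist_le_infDist_of_subset Set.subset_union_right ⟨o, hoR⟩
      _ ≤ mR (3 * max q 1) Q * κ (dist o (β s)) := hkey
      _ ≤ _ := mul_le_mul_of_nonneg_right (le_max_right _ _) (hκ1 _)
  · -- use the P side via the reversed segment
    set β' : ℝ → X := fun u => β (a + b - u) with hβ'def
    have hβ' : QGSeg q Q a b β' := hβ.rev
    have ht₀' : a + b - t₀ ∈ Set.Icc a b := ⟨by linarith [ht₀.2], by linarith [ht₀.1]⟩
    have hβ't₀ : β' (a + b - t₀) = β t₀ := by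
      simp only [hβ'def]; congr 1; ring
    have hmin2 : ∀ t ∈ Set.Icc a b, dist o (β' (a + b - t₀)) ≤ dist o (β' t) := by
      intro t ht
      rw [hβ't₀]
      exact hmin _ ⟨by linarith [ht.2], by linarith [ht.1]⟩
    obtain ⟨γ, hγ, hγa, hγeq⟩ := concat_qgseg hgeo o hq hQ ht₀' hβ' hmin2
    have hL0 : 0 ≤ dist o (β' (a + b - t₀)) := dist_nonneg
    have ha'b : a + b - t₀ - dist o (β' (a + b - t₀)) ≤ b := by linarith [ht₀.1]
    have hγb : γ b = β' b := hγeq b ⟨by linarith [ht₀.1], le_rfl⟩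
    have hβ'b : β' b = β a := by simp only [hβ'def]; congr 1; ring
    have hsmem : a + b - s ∈ Set.Icc (a + b - t₀ - dist o (β' (a + b - t₀))) b := by
      constructor
      · linarith [hs.2]
      · linarith [hs.1]
    have hkey := hmP (3 * max q 1) Q (a + b - t₀ - dist o (β' (a + b - t₀))) b hq'0 hQ ha'b γ hγ
      (by rw [hγa]; exact hoP) (by rw [hγb, hβ'b]; exact hza) (a + b - s) hsmem
    have hγs : γ (a + b - s) = β s := by
      rw [hγeq (a + b - s) ⟨by linarith, by linarith [hs.1]⟩]
      simp only [hβ'def]; congr 1; ring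
    rw [hγs] at hkey
    calc Metric.infDist (β s) (P ∪ R) ≤ Metric.infDist (β s) P :=
          Metric.infDist_le_infDist_of_subset Set.subset_union_left ⟨o, hoP⟩
      _ ≤ mP (3 * max q 1) Q * κ (dist o (β s)) := hkey
      _ ≤ _ := mul_le_mul_of_nonneg_right (le_max_left _ _) (hκ1 _)

/-- If `α₁, α₂` are weakly `κ`-Morse quasi-geodesic rays based at `o` in a geodesic metric
space, then `Z = α₁ ∪ α₂` is weakly `κ`-Morse: any `(q,Q)`-quasi-geodesic segment with
endpoints on `Z` lies in a `(κ, C)`-neighborhood of `Z` with `C` depending only on `q, Q`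
and the weak Morse gauges of `α₁, α₂`. -/
theorem union_of_weaklyKappaMorse_rays {X : Type*} [MetricSpace X]
    (hgeo : IsGeodesicSpace X) (κ : ℝ → ℝ) (hκ : Sublinear κ) (o : X)
    (q₁ Q₁ q₂ Q₂ : ℝ) (hq₁ : 0 < q₁) (hQ₁ : 0 ≤ Q₁) (hq₂ : 0 < q₂) (hQ₂ : 0 ≤ Q₂)
    (α₁ α₂ : ℝ → X) (hα₁ : QGRay q₁ Q₁ α₁) (hα₂ : QGRay q₂ Q₂ α₂)
    (h₁o : α₁ 0 = o) (h₂o : α₂ 0 = o)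
    (hW₁ : WeaklyKappaMorse o κ (α₁ '' Set.Ici 0))
    (hW₂ : WeaklyKappaMorse o κ (α₂ '' Set.Ici 0)) :
    WeaklyKappaMorse o κ (α₁ '' Set.Ici 0 ∪ α₂ '' Set.Ici 0) := by
  obtain ⟨m₁, hm₁⟩ := hW₁
  obtain ⟨m₂, hm₂⟩ := hW₂
  have hκ1 : ∀ t : ℝ, 0 ≤ κ t := fun t => zero_le_one.trans (hκ.1 t)
  have hoA : o ∈ α₁ '' Set.Ici 0 := ⟨0, Set.mem_Ici.mpr le_rfl, h₁o⟩
  have hoB : o ∈ α₂ '' Set.Ici 0 := ⟨0, Set.mem_Ici.mpr le_rfl, h₂o⟩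
  refine ⟨fun q Q => max (max (m₁ q Q) (m₂ q Q))
    (max (m₁ (3 * max q 1) Q) (m₂ (3 * max q 1) Q)), ?_⟩
  intro q Q a b hq hQ hab β hβ hza hzb s hs
  rcases hza with hza | hza <;> rcases hzb with hzb | hzb
  · calc Metric.infDist (β s) (α₁ '' Set.Ici 0 ∪ α₂ '' Set.Ici 0)
        ≤ Metric.infDist (β s) (α₁ '' Set.Ici 0) :=
          Metric.infDist_le_infDist_of_subset Set.subset_union_left ⟨o, hoA⟩
      _ ≤ m₁ q Q * κ (dist o (β s)) := hm₁ q Q a b hq hQ hab β hβ hza hzb s hs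
      _ ≤ _ := mul_le_mul_of_nonneg_right
          ((le_max_left _ _).trans (le_max_left _ _)) (hκ1 _)
  · calc Metric.infDist (β s) (α₁ '' Set.Ici 0 ∪ α₂ '' Set.Ici 0)
        ≤ max (m₁ (3 * max q 1) Q) (m₂ (3 * max q 1) Q) * κ (dist o (β s)) :=
          cross_case hgeo κ hκ1 o _ _ hoA hoB m₁ m₂ hm₁ hm₂ q Q a b hq hQ hab β hβ hza hzb s hs
      _ ≤ _ := mul_le_mul_of_nonneg_right (le_max_right _ _) (hκ1 _)
  · have hcc := cross_case hgeo κ hκ1 o _ _ hoB hoA m₂ m₁ hm₂ hm₁ q Q a b hq hQ hab β hβ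
      hza hzb s hs
    rw [Set.union_comm] at hcc
    calc Metric.infDist (β s) (α₁ '' Set.Ici 0 ∪ α₂ '' Set.Ici 0)
        ≤ max (m₂ (3 * max q 1) Q) (m₁ (3 * max q 1) Q) * κ (dist o (β s)) := hcc
      _ ≤ _ := mul_le_mul_of_nonneg_right
          (max_le ((le_max_right _ _).trans (le_max_right _ _))
            ((le_max_left _ _).trans (le_max_right _ _))) (hκ1 _)
  · calc Metric.infDist (β s) (α₁ '' Set.Ici 0 ∪ α₂ '' Set.Ici 0)
        ≤ Metric.infDist (β s) (α₂ '' Set.Ici 0) :=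
          Metric.infDist_le_infDist_of_subset Set.subset_union_right ⟨o, hoB⟩
      _ ≤ m₂ q Q * κ (dist o (β s)) := hm₂ q Q a b hq hQ hab β hβ hza hzb s hs
      _ ≤ _ := mul_le_mul_of_nonneg_right
          ((le_max_right _ _).trans (le_max_left _ _)) (hκ1 _)
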